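/- Let F be a finite field, G ⊆ F, and d, d' ∈ ℕ with d' ≥ 2(|G| − 1). Let Q ⊆ F^{m+k} with |Q| < |G|^k, and let Z be uniformly random among polynomials in m+k variables over F with individual degree at most d in the first m variables and at most d' in the remaining k variables. Then the random families (∑_{y∈G^k} Z(α, y))_{α∈F^m} and (Z(q))_{q∈Q} are statistically independent. -/

import Mathlib

open MvPolynomial Finset

section Aux
variable {R : Type*} [CommRing R]

lemma degreeOf_rename_notin_range {σ τ : Type*} (f : σ → τ) (P : MvPolynomial σ R)
    (t : τ) (h : t ∉ Set.range f) : degreeOf t (rename f P) = 0 := by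
  refine Nat.le_zero.mp (degreeOf_le_iff.mpr fun u hu => ?_)
  obtain ⟨u', hu', -⟩ := coeff_rename_ne_zero f P u (mem_support_iff.mp hu)
  rw [← hu', Finsupp.mapDomain_notin_range _ _ h]

lemma degreeOf_aeval_sum_elim_le {S T : Type*} [Nontrivial R] [DecidableEq S] (y : T → R)
    (Z : MvPolynomial (S ⊕ T) R) (i : S) :
    degreeOf i (aeval (Sum.elim X (fun j => C (y j)) : S ⊕ T → MvPolynomial S R) Z)
      ≤ degreeOf (Sum.inl i) Z := by
  classical
  rw [aeval_def, eval₂_eq]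
  refine le_trans (degreeOf_sum_le _ _ _) (Finset.sup_le fun u hu => ?_)
  refine le_trans (degreeOf_mul_le _ _ _) ?_
  rw [MvPolynomial.algebraMap_eq, degreeOf_C, zero_add]
  refine le_trans (degreeOf_prod_le _ _ _) ?_
  have hbd : ∀ s ∈ u.support,
      degreeOf i ((Sum.elim X (fun j => C (y j)) s) ^ u s) ≤ if s = Sum.inl i then u s else 0 := by
    rintro (i' | j) -
    · by_cases hii : i' = i
      · subst hii
        simpa [degreeOf_X] using degreeOf_pow_le i' (X i' : MvPolynomial S R) (u (Sum.inl i'))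
      · simp only [Sum.elim_inl, if_neg (by simp [hii] : Sum.inl i' ≠ Sum.inl i)]
        refine le_trans (degreeOf_pow_le _ _ _) ?_
        rw [degreeOf_X, if_neg (Ne.symm hii), mul_zero]
    · simp only [Sum.elim_inr, if_neg (by simp : (Sum.inr j : S ⊕ T) ≠ Sum.inl i)]
      rw [← C_pow, degreeOf_C]
  refine le_trans (Finset.sum_le_sum hbd) ?_
  rw [Finset.sum_ite_eq' u.support (Sum.inl i) (fun s => u s)]
  have : u (Sum.inl i) ≤ degreeOf (Sum.inl i) Z := by
    rw [degreeOf_eq_sup]; exact Finset.le_sup (f := fun m => m (Sum.inl i)) hu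
  split_ifs <;> omega

lemma eval_aeval_sum_elim {S T : Type*} (y : T → R) (α : S → R) (Z : MvPolynomial (S ⊕ T) R) :
    eval α (aeval (Sum.elim X (fun j => C (y j)) : S ⊕ T → MvPolynomial S R) Z)
      = eval (Sum.elim α y) Z := by
  rw [aeval_def, eval_eval₂]
  have h1 : (eval α).comp (algebraMap R (MvPolynomial S R)) = RingHom.id R := by
    ext a; simp [MvPolynomial.algebraMap_eq]
  rw [h1]
  have h2 : (fun s => eval α (Sum.elim X (fun j => C (y j)) s)) = Sum.elim α y := by
    funext s; cases s <;> simp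
  rw [h2, eval₂_id]

lemma aeval_C_comp {S T : Type*} (y : T → R) (P : MvPolynomial T R) :
    aeval (fun j => (C (y j) : MvPolynomial S R)) P = C (eval y P) := by
  rw [aeval_def, MvPolynomial.algebraMap_eq]
  have := eval₂_comp_left (C : R →+* MvPolynomial S R) (RingHom.id R) y P
  simp only [eval₂_id] at this
  rw [this, RingHom.comp_id]
  rfl
end Aux

section P
variable {F : Type*} [Field F] [Fintype F]

noncomputable def deltaPoly [DecidableEq F] (G : Finset F) {k : ℕ} (c : Fin k → F) :
    MvPolynomial (Fin k) F :=
  ∏ j, ∏ g ∈ G.erase (c j), (X j - C g)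

lemma eval_deltaPoly [DecidableEq F] (G : Finset F) {k : ℕ} (c y : Fin k → F) :
    eval y (deltaPoly G c) = ∏ j, ∏ g ∈ G.erase (c j), (y j - g) := by
  simp [deltaPoly]

lemma degreeOf_deltaPoly_le [DecidableEq F] (G : Finset F) {k : ℕ} (c : Fin k → F)
    (hc : ∀ j, c j ∈ G) (j' : Fin k) : degreeOf j' (deltaPoly G c) ≤ G.card - 1 := by
  refine le_trans (degreeOf_prod_le _ _ _) ?_
  have hbd : ∀ j ∈ Finset.univ, degreeOf j' (∏ g ∈ G.erase (c j), (X j - C g : MvPolynomial (Fin k) F))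
      ≤ if j = j' then G.card - 1 else 0 := by
    intro j _
    refine le_trans (degreeOf_prod_le _ _ _) ?_
    have h1 : ∀ g ∈ G.erase (c j), degreeOf j' (X j - C g : MvPolynomial (Fin k) F)
        ≤ if j = j' then 1 else 0 := by
      intro g _
      refine le_trans (degreeOf_sub_le _ _ _) ?_
      simp [degreeOf_X, eq_comm]
    refine le_trans (Finset.sum_le_sum h1) ?_
    rw [Finset.sum_const, Finset.card_erase_of_mem (hc j), smul_eq_mul]
    split_ifs <;> simp
  refine le_trans (Finset.sum_le_sum hbd) ?_
  rw [Finset.sum_ite_eq' Finset.univ j' (fun _ => G.card - 1)]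
  simp

lemma eval_deltaPoly_ne [DecidableEq F] (G : Finset F) {k : ℕ} (c y : Fin k → F)
    (hy : ∀ j, y j ∈ G) (hne : y ≠ c) : eval y (deltaPoly G c) = 0 := by
  rw [eval_deltaPoly]
  obtain ⟨j, hj⟩ := Function.ne_iff.mp hne
  refine Finset.prod_eq_zero (Finset.mem_univ j) ?_
  exact Finset.prod_eq_zero (Finset.mem_erase.mpr ⟨hj, hy j⟩) (sub_self _)

lemma eval_deltaPoly_self_ne_zero [DecidableEq F] (G : Finset F) {k : ℕ} (c : Fin k → F) :
    eval c (deltaPoly G c) ≠ 0 := by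
  rw [eval_deltaPoly]
  rw [Finset.prod_ne_zero_iff]
  intro j _
  rw [Finset.prod_ne_zero_iff]
  intro g hg
  exact sub_ne_zero_of_ne (Ne.symm (Finset.ne_of_mem_erase hg))

lemma exists_good_P (G : Finset F) (k d' : ℕ) (hd' : 2 * (G.card - 1) ≤ d')
    (Q' : Finset (Fin k → F)) (hQ : Q'.card < G.card ^ k) :
    ∃ P : MvPolynomial (Fin k) F, (∀ j, degreeOf j P ≤ d') ∧ (∀ q ∈ Q', eval q P = 0) ∧
      (∑ y ∈ Fintype.piFinset (fun _ : Fin k => G), eval y P = 1) := by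
  classical
  set grid := Fintype.piFinset (fun _ : Fin k => G) with hgrid
  have hmemgrid : ∀ y : ↥grid, ∀ j, (y : Fin k → F) j ∈ G := by
    intro y j; exact (Fintype.mem_piFinset.mp y.2) j
  -- linear map
  set M : Matrix ↥Q' ↥grid F := Matrix.of fun q c => eval (q : Fin k → F) (deltaPoly G (c : Fin k → F)) with hM
  have hnotinj : ¬ Function.Injective M.mulVecLin := by
    intro hinj
    have hle := LinearMap.finrank_le_finrank_of_injective hinj
    rw [Module.finrank_pi, Module.finrank_pi, Fintype.card_coe, Fintype.card_coe] at hle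
    rw [hgrid, Fintype.card_piFinset] at hle
    simp only [Finset.prod_const, Finset.card_univ, Fintype.card_fin] at hle
    omega
  rw [Function.not_injective_iff] at hnotinj
  obtain ⟨a, b, hab, hne⟩ := hnotinj
  set φ : ↥grid → F := a - b with hφ
  have hTφ : M.mulVecLin φ = 0 := by rw [hφ, map_sub, hab, sub_self]
  have hφne : φ ≠ 0 := sub_ne_zero_of_ne hne
  obtain ⟨c0, hc0⟩ := Function.ne_iff.mp hφne
  set N : MvPolynomial (Fin k) F := ∑ c : ↥grid, C (φ c) * deltaPoly G (c : Fin k → F) with hN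
  have hNdeg : ∀ j, degreeOf j N ≤ G.card - 1 := by
    intro j
    refine le_trans (degreeOf_sum_le _ _ _) (Finset.sup_le fun c _ => ?_)
    refine le_trans (degreeOf_mul_le _ _ _) ?_
    rw [degreeOf_C, zero_add]
    exact degreeOf_deltaPoly_le G _ (hmemgrid c) j
  have hNzero : ∀ q ∈ Q', eval q N = 0 := by
    intro q hq
    have := congrFun hTφ ⟨q, hq⟩
    simp only [Matrix.mulVecLin_apply, Pi.zero_apply, Matrix.mulVec, dotProduct] at this
    rw [hN, map_sum]
    rw [← this]
    refine Finset.sum_congr rfl fun c _ => ?_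
    simp [hM, mul_comm]
  have hNc0 : eval (c0 : Fin k → F) N = φ c0 * eval (c0 : Fin k → F) (deltaPoly G (c0 : Fin k → F)) := by
    rw [hN, map_sum]
    rw [Finset.sum_eq_single c0]
    · simp
    · intro c _ hcne
      have : eval (c0 : Fin k → F) (deltaPoly G (c : Fin k → F)) = 0 := by
        refine eval_deltaPoly_ne G _ _ (hmemgrid c0) ?_
        intro h; exact hcne (Subtype.ext h).symm
      simp [this]
    · intro h; exact absurd (Finset.mem_univ c0) h
  have hNc0ne : eval (c0 : Fin k → F) N ≠ 0 :=
    hNc0 ▸ mul_ne_zero hc0 (eval_deltaPoly_self_ne_zero G _)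
  have hDc0ne := eval_deltaPoly_self_ne_zero G (c0 : Fin k → F)
  refine ⟨C ((eval (c0 : Fin k → F) N * eval (c0 : Fin k → F) (deltaPoly G (c0 : Fin k → F)))⁻¹)
      * N * deltaPoly G (c0 : Fin k → F), ?_, ?_, ?_⟩
  · intro j
    refine le_trans (degreeOf_mul_le _ _ _) ?_
    refine le_trans (add_le_add (le_trans (degreeOf_mul_le _ _ _)
      (add_le_add (le_of_eq (degreeOf_C _ _)) (hNdeg j)))
      (degreeOf_deltaPoly_le G _ (hmemgrid c0) j)) ?_
    omega
  · intro q hq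
    simp [hNzero q hq]
  · rw [Finset.sum_eq_single (c0 : Fin k → F)]
    · rw [map_mul, map_mul, eval_C, mul_assoc, inv_mul_cancel₀ (mul_ne_zero hNc0ne hDc0ne)]
    · intro y hy hyne
      have h0 : eval y (deltaPoly G (c0 : Fin k → F)) = 0 :=
        eval_deltaPoly_ne G _ _ (fun j => (Fintype.mem_piFinset.mp hy) j) hyne
      rw [map_mul, h0, mul_zero]
    · intro h; exact absurd c0.2 h
end P

lemma card_indep_of_involution {α : Type*} (C S E : α → Prop) (Φ : α × α → α × α)
    (hΦΦ : ∀ p, Φ (Φ p) = p)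
    (h1 : ∀ Z W, (C Z ∧ S Z ∧ E Z) → C W →
      (C (Φ (Z, W)).1 ∧ S (Φ (Z, W)).1) ∧ (C (Φ (Z, W)).2 ∧ E (Φ (Z, W)).2))
    (h2 : ∀ Z W, (C Z ∧ S Z) → (C W ∧ E W) →
      (C (Φ (Z, W)).1 ∧ S (Φ (Z, W)).1 ∧ E (Φ (Z, W)).1) ∧ C (Φ (Z, W)).2) :
    Nat.card {Z // C Z ∧ S Z ∧ E Z} * Nat.card {Z // C Z}
      = Nat.card {Z // C Z ∧ S Z} * Nat.card {Z // C Z ∧ E Z} := by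
  rw [← Nat.card_prod, ← Nat.card_prod]
  refine Nat.card_congr ⟨
    fun p => (⟨(Φ (p.1.1, p.2.1)).1, (h1 p.1.1 p.2.1 p.1.2 p.2.2).1⟩,
              ⟨(Φ (p.1.1, p.2.1)).2, (h1 p.1.1 p.2.1 p.1.2 p.2.2).2⟩),
    fun q => (⟨(Φ (q.1.1, q.2.1)).1, (h2 q.1.1 q.2.1 q.1.2 q.2.2).1⟩,
              ⟨(Φ (q.1.1, q.2.1)).2, (h2 q.1.1 q.2.1 q.1.2 q.2.2).2⟩), ?_, ?_⟩
  · rintro ⟨⟨Z, hZ⟩, ⟨W, hW⟩⟩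
    have := hΦΦ (Z, W)
    ext <;> simp only <;> rw [Prod.mk.eta, this]
  · rintro ⟨⟨Z, hZ⟩, ⟨W, hW⟩⟩
    have := hΦΦ (Z, W)
    ext <;> simp only <;> rw [Prod.mk.eta, this]

/-- Average-case (hiding) form of the algebraic query complexity lower bound:
for `Z` uniformly random among polynomials of individual degree `≤ d` in the
first `m` variables and `≤ d'` in the last `k` variables (`d' ≥ 2(|G|-1)`),
and `|Q| < |G|^k`, the family of partial sums `(∑_{y ∈ G^k} Z(α,y))_{α ∈ F^m}`
is statistically independent of the evaluations `(Z(q))_{q ∈ Q}`. -/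
theorem random_commitment_partial_sums_independent
    {F : Type*} [Field F] [Fintype F]
    (G : Finset F) (m k d d' : ℕ) (hd' : 2 * (G.card - 1) ≤ d')
    (Q : Finset ((Fin m → F) × (Fin k → F))) (hQ : Q.card < G.card ^ k) :
    ∀ (f : (Fin m → F) → F) (g : ((Fin m → F) × (Fin k → F)) → F),
      Nat.card {Z : MvPolynomial (Fin m ⊕ Fin k) F //
          ((∀ i, Z.degreeOf (Sum.inl i) ≤ d) ∧ (∀ j, Z.degreeOf (Sum.inr j) ≤ d')) ∧
          (∀ α : Fin m → F,
            ∑ y ∈ Fintype.piFinset (fun _ : Fin k => G),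
              MvPolynomial.eval (Sum.elim α y) Z = f α) ∧
          (∀ q ∈ Q, MvPolynomial.eval (Sum.elim q.1 q.2) Z = g q)}
        * Nat.card {Z : MvPolynomial (Fin m ⊕ Fin k) F //
            (∀ i, Z.degreeOf (Sum.inl i) ≤ d) ∧ (∀ j, Z.degreeOf (Sum.inr j) ≤ d')}
      = Nat.card {Z : MvPolynomial (Fin m ⊕ Fin k) F //
            ((∀ i, Z.degreeOf (Sum.inl i) ≤ d) ∧ (∀ j, Z.degreeOf (Sum.inr j) ≤ d')) ∧
            (∀ α : Fin m → F,
              ∑ y ∈ Fintype.piFinset (fun _ : Fin k => G),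
                MvPolynomial.eval (Sum.elim α y) Z = f α)}
        * Nat.card {Z : MvPolynomial (Fin m ⊕ Fin k) F //
            ((∀ i, Z.degreeOf (Sum.inl i) ≤ d) ∧ (∀ j, Z.degreeOf (Sum.inr j) ≤ d')) ∧
            (∀ q ∈ Q, MvPolynomial.eval (Sum.elim q.1 q.2) Z = g q)} := by
  classical
  intro f g
  obtain ⟨P, hPdeg, hPzero, hPsum⟩ := exists_good_P G k d' hd' (Q.image Prod.snd)
    (lt_of_le_of_lt Finset.card_image_le hQ)
  have hPzero' : ∀ q ∈ Q, eval q.2 P = 0 := fun q hq =>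
    hPzero _ (Finset.mem_image_of_mem _ hq)
  set grid := Fintype.piFinset (fun _ : Fin k => G) with hgrid
  set σf : MvPolynomial (Fin m) F → MvPolynomial (Fin m ⊕ Fin k) F :=
    fun R => rename Sum.inl R * rename Sum.inr P with hσf
  set ρ : MvPolynomial (Fin m ⊕ Fin k) F → MvPolynomial (Fin m) F :=
    fun Z => ∑ y ∈ grid, aeval (Sum.elim X (fun j => C (y j))) Z with hρ
  have heval_ρ : ∀ (Z) (α : Fin m → F), eval α (ρ Z) = ∑ y ∈ grid, eval (Sum.elim α y) Z := by
    intro Z α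
    rw [hρ]; simp only [map_sum]
    exact Finset.sum_congr rfl fun y _ => eval_aeval_sum_elim y α Z
  have hρdeg : ∀ Z : MvPolynomial (Fin m ⊕ Fin k) F,
      (∀ i, Z.degreeOf (Sum.inl i) ≤ d) → ∀ i, degreeOf i (ρ Z) ≤ d := by
    intro Z hZ i
    refine le_trans (degreeOf_sum_le _ _ _) (Finset.sup_le fun y _ =>
      le_trans (degreeOf_aeval_sum_elim_le (fun j => y j) Z i) (hZ i))
  have hρ_add : ∀ Z W, ρ (Z + W) = ρ Z + ρ W := by
    intro Z W; simp [hρ, map_add, Finset.sum_add_distrib]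
  have hσ_add : ∀ A B, σf (A + B) = σf A + σf B := by
    intro A B; simp only [hσf, map_add, add_mul]
  have hσ_zero : σf 0 = 0 := by simp [hσf]
  have hρσ : ∀ R, ρ (σf R) = R := by
    intro R
    rw [hρ]; simp only
    have hterm : ∀ y ∈ grid, aeval (Sum.elim X fun j => C (y j)) (σf R) = R * C (eval y P) := by
      intro y _
      rw [hσf]; simp only [map_mul, aeval_rename, Sum.elim_comp_inl, Sum.elim_comp_inr]
      rw [aeval_X_left_apply, aeval_C_comp]
    rw [Finset.sum_congr rfl hterm, ← Finset.mul_sum, ← map_sum, hPsum, map_one, mul_one]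
  have heval_σ : ∀ (R) (α : Fin m → F) (y : Fin k → F),
      eval (Sum.elim α y) (σf R) = eval α R * eval y P := by
    intro R α y
    rw [hσf]; simp only [map_mul, eval_rename, Sum.elim_comp_inl, Sum.elim_comp_inr]
  -- degree facts
  have hσdeg : ∀ (Z Z' W' : MvPolynomial (Fin m ⊕ Fin k) F),
      ((∀ i, Z.degreeOf (Sum.inl i) ≤ d) ∧ (∀ j, Z.degreeOf (Sum.inr j) ≤ d')) →
      ((∀ i, Z'.degreeOf (Sum.inl i) ≤ d) ∧ (∀ j, Z'.degreeOf (Sum.inr j) ≤ d')) →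
      ((∀ i, W'.degreeOf (Sum.inl i) ≤ d) ∧ (∀ j, W'.degreeOf (Sum.inr j) ≤ d')) →
      ((∀ i, (Z + σf (ρ Z' - ρ W')).degreeOf (Sum.inl i) ≤ d) ∧
        (∀ j, (Z + σf (ρ Z' - ρ W')).degreeOf (Sum.inr j) ≤ d')) := by
    intro Z Z' W' hZ hZ' hW'
    have hR : ∀ i, degreeOf i (ρ Z' - ρ W') ≤ d := fun i =>
      le_trans (degreeOf_sub_le _ _ _) (max_le (hρdeg Z' hZ'.1 i) (hρdeg W' hW'.1 i))
    constructor
    · intro i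
      refine le_trans (degreeOf_add_le _ _ _) (max_le (hZ.1 i) ?_)
      rw [hσf]; simp only
      refine le_trans (degreeOf_mul_le _ _ _) ?_
      rw [degreeOf_rename_of_injective Sum.inl_injective,
        degreeOf_rename_notin_range _ _ _ (by rintro ⟨j, h⟩; exact Sum.inr_ne_inl h),
        add_zero]
      exact hR i
    · intro j
      refine le_trans (degreeOf_add_le _ _ _) (max_le (hZ.2 j) ?_)
      rw [hσf]; simp only
      refine le_trans (degreeOf_mul_le _ _ _) ?_
      rw [degreeOf_rename_of_injective Sum.inr_injective,
        degreeOf_rename_notin_range _ _ _ (by rintro ⟨i, h⟩; exact Sum.inl_ne_inr h),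
        zero_add]
      exact hPdeg j
  -- sum and eval shifts
  have hSum_shift : ∀ (Z R) (α : Fin m → F),
      ∑ y ∈ grid, eval (Sum.elim α y) (Z + σf R)
        = (∑ y ∈ grid, eval (Sum.elim α y) Z) + eval α R := by
    intro Z R α
    simp only [map_add, Finset.sum_add_distrib]
    congr 1
    simp only [heval_σ, ← Finset.mul_sum, hPsum, mul_one]
  have hEval_shift : ∀ (Z R), ∀ q ∈ Q,
      eval (Sum.elim q.1 q.2) (Z + σf R) = eval (Sum.elim q.1 q.2) Z := by
    intro Z R q hq
    rw [map_add, heval_σ, hPzero' q hq, mul_zero, add_zero]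
  -- the involution
  set Φ : (MvPolynomial (Fin m ⊕ Fin k) F × MvPolynomial (Fin m ⊕ Fin k) F) →
      (MvPolynomial (Fin m ⊕ Fin k) F × MvPolynomial (Fin m ⊕ Fin k) F) :=
    fun p => (p.2 + σf (ρ p.1 - ρ p.2), p.1 + σf (ρ p.2 - ρ p.1)) with hΦ
  have hρΦ : ∀ A B, ρ (B + σf (ρ A - ρ B)) = ρ A := by
    intro A B
    rw [hρ_add, hρσ]; ring
  have hΦΦ : ∀ p, Φ (Φ p) = p := by
    rintro ⟨A, B⟩
    rw [hΦ]; simp only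
    rw [hρΦ, hρΦ]
    have e1 : A + σf (ρ B - ρ A) + σf (ρ A - ρ B) = A := by
      rw [add_assoc, ← hσ_add, (by ring : ρ B - ρ A + (ρ A - ρ B) = 0), hσ_zero, add_zero]
    have e2 : B + σf (ρ A - ρ B) + σf (ρ B - ρ A) = B := by
      rw [add_assoc, ← hσ_add, (by ring : ρ A - ρ B + (ρ B - ρ A) = 0), hσ_zero, add_zero]
    rw [e1, e2]
  refine card_indep_of_involution
    (fun Z => (∀ i, Z.degreeOf (Sum.inl i) ≤ d) ∧ (∀ j, Z.degreeOf (Sum.inr j) ≤ d'))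
    (fun Z => ∀ α : Fin m → F, ∑ y ∈ grid, MvPolynomial.eval (Sum.elim α y) Z = f α)
    (fun Z => ∀ q ∈ Q, MvPolynomial.eval (Sum.elim q.1 q.2) Z = g q)
    Φ hΦΦ ?_ ?_
  · rintro Z W ⟨hCZ, hSZ, hEZ⟩ hCW
    refine ⟨⟨hσdeg W Z W hCW hCZ hCW, ?_⟩, ⟨hσdeg Z W Z hCZ hCW hCZ, ?_⟩⟩
    · intro α
      rw [show (Φ (Z, W)).1 = W + σf (ρ Z - ρ W) from rfl, hSum_shift, map_sub,
        heval_ρ, heval_ρ, hSZ α]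
      ring
    · intro q hq
      rw [show (Φ (Z, W)).2 = Z + σf (ρ W - ρ Z) from rfl, hEval_shift _ _ q hq]
      exact hEZ q hq
  · rintro Z W ⟨hCZ, hSZ⟩ ⟨hCW, hEW⟩
    refine ⟨⟨hσdeg W Z W hCW hCZ hCW, ?_, ?_⟩, hσdeg Z W Z hCZ hCW hCZ⟩
    · intro α
      rw [show (Φ (Z, W)).1 = W + σf (ρ Z - ρ W) from rfl, hSum_shift, map_sub,
        heval_ρ, heval_ρ, hSZ α]
      ring
    · intro q hq
      rw [show (Φ (Z, W)).1 = W + σf (ρ Z - ρ W) from rfl, hEval_shift _ _ q hq]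
      exact hEW q hq
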